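/- Let 1 → N → G → Q → 1 be a short exact sequence of groups. Then there is an exact sequence (Stallings) H₂(G;ℤ) → H₂(Q;ℤ) → N/[N,G] → H₁(G;ℤ) → H₁(Q;ℤ) → 0, natural in morphisms of short exact sequences. -/

import Mathlib

noncomputable section

/-- The canonical free presentation `FreeGroup G → G` of a group `G`. -/
def freePres (G : Type*) [Group G] : FreeGroup G →* G := FreeGroup.lift id

theorem freePres_naturality {G₁ G₂ : Type*} [Group G₁] [Group G₂] (f : G₁ →* G₂) :
    (freePres G₂).comp (FreeGroup.map f) = f.comp (freePres G₁) := by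
  ext x
  simp [freePres]

theorem freeMap_ker_le {G₁ G₂ : Type*} [Group G₁] [Group G₂] (f : G₁ →* G₂) :
    (freePres G₁).ker.map (FreeGroup.map f) ≤ (freePres G₂).ker := by
  intro y hy
  obtain ⟨z, hz, rfl⟩ := Subgroup.mem_map.mp hy
  rw [MonoidHom.mem_ker, ← MonoidHom.comp_apply, freePres_naturality,
    MonoidHom.comp_apply, MonoidHom.mem_ker.mp hz, map_one]

/-- Hopf's formula model for the second integral group homology `H₂(G;ℤ)`:
for the canonical free presentation `1 → R → F → G → 1` with `F = FreeGroup G`,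
`H₂(G;ℤ) ≅ (R ⊓ [F,F]) / [F,R]`. -/
abbrev SchurH2 (G : Type*) [Group G] : Type _ :=
  ↥((freePres G).ker ⊓ commutator (FreeGroup G)) ⧸
    ((⁅(freePres G).ker, (⊤ : Subgroup (FreeGroup G))⁆).subgroupOf
      ((freePres G).ker ⊓ commutator (FreeGroup G)))

theorem freeMap_mem {G₁ G₂ : Type*} [Group G₁] [Group G₂] (f : G₁ →* G₂)
    (x : ↥((freePres G₁).ker ⊓ commutator (FreeGroup G₁))) :
    FreeGroup.map f x.1 ∈ (freePres G₂).ker ⊓ commutator (FreeGroup G₂) := by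
  have hk := (Subgroup.mem_inf.mp x.2).1
  have hc := (Subgroup.mem_inf.mp x.2).2
  refine Subgroup.mem_inf.mpr ⟨?_, ?_⟩
  · exact freeMap_ker_le f (Subgroup.mem_map.mpr ⟨x.1, hk, rfl⟩)
  · have hle : (commutator (FreeGroup G₁)).map (FreeGroup.map f) ≤
        commutator (FreeGroup G₂) := by
      rw [commutator_def, Subgroup.map_commutator, commutator_def]
      exact Subgroup.commutator_mono le_top le_top
    exact hle (Subgroup.mem_map.mpr ⟨x.1, hc, rfl⟩)

/-- The map induced by a group homomorphism on Hopf-formula `H₂`. -/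
def SchurH2map {G₁ G₂ : Type*} [Group G₁] [Group G₂] (f : G₁ →* G₂) :
    SchurH2 G₁ →* SchurH2 G₂ :=
  QuotientGroup.map _ _
    (((FreeGroup.map f).domRestrict ((freePres G₁).ker ⊓ commutator (FreeGroup G₁))).codRestrict
      ((freePres G₂).ker ⊓ commutator (FreeGroup G₂)) (freeMap_mem f))
    (by
      intro x hx
      simp only [Subgroup.mem_subgroupOf, Subgroup.mem_comap] at hx ⊢
      have hle : (⁅(freePres G₁).ker, (⊤ : Subgroup (FreeGroup G₁))⁆).map (FreeGroup.map f) ≤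
          ⁅(freePres G₂).ker, (⊤ : Subgroup (FreeGroup G₂))⁆ := by
        rw [Subgroup.map_commutator]
        exact Subgroup.commutator_mono (freeMap_ker_le f) le_top
      exact hle (Subgroup.mem_map.mpr ⟨x.1, hx, rfl⟩))

/-- The coinvariants `N/[N,G]` of a normal subgroup `N ⊴ G`. -/
abbrev Coinv (G : Type*) [Group G] (N : Subgroup G) [N.Normal] : Type _ :=
  N ⧸ ((⁅N, (⊤ : Subgroup G)⁆).subgroupOf N)

/-- The canonical map `N/[N,G] → H₁(G;ℤ) = Gᵃᵇ`. -/
def coinvToAb (G : Type*) [Group G] (N : Subgroup G) [N.Normal] :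
    Coinv G N →* Abelianization G :=
  QuotientGroup.lift _ ((Abelianization.of (G := G)).comp N.subtype)
    (by
      intro x hx
      rw [Subgroup.mem_subgroupOf] at hx
      have hmem : (x : G) ∈ commutator G := Subgroup.commutator_mono le_top le_top hx
      exact (QuotientGroup.eq_one_iff _).mpr hmem)

/-- The map on coinvariants induced by a morphism of pairs `(G, N) → (G', N')`. -/
def coinvMap {G G' : Type*} [Group G] [Group G'] (f : G →* G') (N : Subgroup G)
    (N' : Subgroup G') [N.Normal] [N'.Normal] (hf : ∀ n ∈ N, f n ∈ N') :
    Coinv G N →* Coinv G' N' :=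
  QuotientGroup.map _ _ ((f.domRestrict N).codRestrict N' (fun x => hf x.1 x.2))
    (by
      intro x hx
      simp only [Subgroup.mem_subgroupOf, Subgroup.mem_comap] at hx ⊢
      have hle : (⁅N, (⊤ : Subgroup G)⁆).map f ≤ ⁅N', (⊤ : Subgroup G')⁆ := by
        rw [Subgroup.map_commutator]
        refine Subgroup.commutator_mono ?_ le_top
        intro y hy
        obtain ⟨z, hz, rfl⟩ := Subgroup.mem_map.mp hy
        exact hf z hz
      exact hle (Subgroup.mem_map.mpr ⟨x.1, hx, rfl⟩))


section StallingsHelpers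

open scoped commutatorElement

lemma comm_mul_central_left {H : Type*} [Group H] (a b c : H)
    (hc : ∀ x, c * x = x * c) : ⁅a * c, b⁆ = ⁅a, b⁆ := by
  have : (a*c)*b*(a*c)⁻¹*b⁻¹ = a*b*a⁻¹*b⁻¹ := by
    rw [mul_inv_rev, mul_assoc a c b, hc b]; group
  simpa [commutatorElement_def] using this

lemma comm_mul_central {H : Type*} [Group H] (a b c d : H)
    (hc : ∀ x, c * x = x * c) (hd : ∀ x, d * x = x * d) : ⁅a * c, b * d⁆ = ⁅a, b⁆ := by
  rw [comm_mul_central_left a (b*d) c hc, ← commutatorElement_inv,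
    comm_mul_central_left b a d hd, commutatorElement_inv]

/-- If two homs out of a free group differ on generators by elements of a central
subgroup `C`, they agree on the commutator subgroup. -/
lemma freeGroup_eq_on_commutator {α H : Type*} [Group H] (φ ψ : FreeGroup α →* H)
    (C : Subgroup H) (hC : ∀ c ∈ C, ∀ x, c * x = x * c)
    (h : ∀ a : α, (φ (FreeGroup.of a))⁻¹ * ψ (FreeGroup.of a) ∈ C) :
    ∀ w ∈ commutator (FreeGroup α), φ w = ψ w := by
  have aux : ∀ w : FreeGroup α, (φ w)⁻¹ * ψ w ∈ C := by
    intro w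
    refine FreeGroup.induction_on w (by simpa using C.one_mem) h ?_ ?_
    · intro a ih
      set A := φ (FreeGroup.of a) with hA
      set B := ψ (FreeGroup.of a) with hB
      have hc := hC _ ih
      have hBA : B * A = A * B := by
        have h1 := hc A
        calc B * A = A * (A⁻¹ * B * A) := by group
          _ = A * (A * (A⁻¹ * B)) := by rw [h1]
          _ = A * B := by group
      have hAB : A * B⁻¹ = B⁻¹ * A := ((show Commute A B from hBA.symm).inv_right).eq
      have key : (φ ((FreeGroup.of a : FreeGroup α))⁻¹)⁻¹ * ψ ((FreeGroup.of a : FreeGroup α))⁻¹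
          = (A⁻¹ * B)⁻¹ := by
        rw [map_inv, map_inv, ← hA, ← hB, inv_inv, mul_inv_rev, inv_inv, hAB]
      rw [key]
      exact C.inv_mem ih
    · intro u v ihu ihv
      have hc := hC _ ihu
      have key : (φ (u*v))⁻¹ * ψ (u*v) = ((φ u)⁻¹ * ψ u) * ((φ v)⁻¹ * ψ v) := by
        simp only [map_mul, mul_inv_rev]
        calc (φ v)⁻¹ * (φ u)⁻¹ * (ψ u * ψ v)
            = (φ v)⁻¹ * ((φ u)⁻¹ * ψ u) * ψ v := by group
          _ = ((φ u)⁻¹ * ψ u) * (φ v)⁻¹ * ψ v := by rw [← hc (φ v)⁻¹]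
          _ = ((φ u)⁻¹ * ψ u) * ((φ v)⁻¹ * ψ v) := by group
      rw [key]
      exact C.mul_mem ihu ihv
  intro w hw
  have hle : commutator (FreeGroup α) ≤ MonoidHom.eqLocus φ ψ := by
    rw [commutator_def, Subgroup.commutator_le]
    intro u _ v _
    show φ ⁅u, v⁆ = ψ ⁅u, v⁆
    rw [map_commutatorElement, map_commutatorElement]
    have hu : ψ u = φ u * ((φ u)⁻¹ * ψ u) := by group
    have hv : ψ v = φ v * ((φ v)⁻¹ * ψ v) := by group
    rw [hu, hv, comm_mul_central _ _ _ _ (hC _ (aux u)) (hC _ (aux v))]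
  exact hle hw

lemma freePres_surjective (G : Type*) [Group G] : Function.Surjective (freePres G) :=
  fun g => ⟨FreeGroup.of g, by simp [freePres]⟩

lemma freeGroup_map_surjective {α β : Type*} {f : α → β} (hf : Function.Surjective f) :
    Function.Surjective (FreeGroup.map f) := by
  intro y
  refine FreeGroup.induction_on y ⟨1, map_one _⟩ ?_ ?_ ?_
  · intro b
    obtain ⟨a, rfl⟩ := hf b
    exact ⟨FreeGroup.of a, by simp⟩
  · intro b _
    obtain ⟨a, rfl⟩ := hf b
    exact ⟨(FreeGroup.of a)⁻¹, by simp⟩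
  · rintro u v ⟨x, rfl⟩ ⟨y, rfl⟩
    exact ⟨x * y, map_mul _ _ _⟩

lemma map_commutator_eq_of_surjective {G H : Type*} [Group G] [Group H] (f : G →* H)
    (hf : Function.Surjective f) : Subgroup.map f (commutator G) = commutator H := by
  rw [commutator_def, commutator_def, Subgroup.map_commutator, ← MonoidHom.range_eq_map,
    MonoidHom.range_eq_top_of_surjective f hf]

section Sec

variable {G : Type*} [Group G] (N : Subgroup G) [N.Normal]

/-- A set-theoretic section of `G → G/N`. -/
noncomputable def sec (q : G ⧸ N) : G := Function.surjInv (QuotientGroup.mk'_surjective N) q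

lemma sec_spec (q : G ⧸ N) : (QuotientGroup.mk' N) (sec N q) = q :=
  Function.surjInv_eq _ q

/-- The lift `FreeGroup (G/N) → G` of the canonical presentation along a section. -/
noncomputable def pmap : FreeGroup (G ⧸ N) →* G := FreeGroup.lift (sec N)

lemma pmap_spec : (QuotientGroup.mk' N).comp (pmap N) = freePres (G ⧸ N) := by
  ext q
  simpa [pmap, freePres] using sec_spec N q

lemma pmap_mem_ker {x : FreeGroup (G ⧸ N)} (hx : x ∈ (freePres (G ⧸ N)).ker) :
    pmap N x ∈ N := by
  have : (QuotientGroup.mk' N) (pmap N x) = 1 := by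
    rw [← MonoidHom.comp_apply, pmap_spec]
    exact hx
  simpa [QuotientGroup.eq_one_iff] using this

lemma pmap_mem_commutator {x : FreeGroup (G ⧸ N)}
    (hx : x ∈ commutator (FreeGroup (G ⧸ N))) : pmap N x ∈ commutator G := by
  have hle : (commutator (FreeGroup (G ⧸ N))).map (pmap N) ≤ commutator G := by
    rw [commutator_def, Subgroup.map_commutator, commutator_def]
    exact Subgroup.commutator_mono le_top le_top
  exact hle (Subgroup.mem_map.mpr ⟨x, hx, rfl⟩)

lemma pmap_mem_relcomm {x : FreeGroup (G ⧸ N)}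
    (hx : x ∈ ⁅(freePres (G ⧸ N)).ker, (⊤ : Subgroup (FreeGroup (G ⧸ N)))⁆) :
    pmap N x ∈ ⁅N, (⊤ : Subgroup G)⁆ := by
  have hle : (⁅(freePres (G ⧸ N)).ker, (⊤ : Subgroup (FreeGroup (G ⧸ N)))⁆).map (pmap N) ≤
      ⁅N, (⊤ : Subgroup G)⁆ := by
    rw [Subgroup.map_commutator]
    refine Subgroup.commutator_mono ?_ le_top
    rintro y ⟨z, hz, rfl⟩
    exact pmap_mem_ker N hz
  exact hle (Subgroup.mem_map.mpr ⟨x, hx, rfl⟩)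

/-- The image of `N` is central in `G / ⁅N, ⊤⁆`. -/
lemma central_in_quot {n : G} (hn : n ∈ N) (x : G ⧸ ⁅N, (⊤ : Subgroup G)⁆) :
    (QuotientGroup.mk' ⁅N, (⊤ : Subgroup G)⁆) n * x
      = x * (QuotientGroup.mk' ⁅N, (⊤ : Subgroup G)⁆) n := by
  obtain ⟨g, rfl⟩ := QuotientGroup.mk'_surjective _ x
  rw [← map_mul, ← map_mul, QuotientGroup.mk'_apply, QuotientGroup.mk'_apply,
    QuotientGroup.eq]
  have : (n * g)⁻¹ * (g * n) = ⁅n⁻¹, g⁻¹⁆⁻¹ := by group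
  rw [this]
  exact Subgroup.inv_mem _
    (Subgroup.commutator_mem_commutator (N.inv_mem hn) (Subgroup.mem_top _))

/-- Two lifts along `G → G/N` of the same hom agree modulo `⁅N,⊤⁆` on commutators. -/
lemma lifts_congr {α : Type*} (φ ψ : FreeGroup α →* G)
    (h : (QuotientGroup.mk' N).comp φ = (QuotientGroup.mk' N).comp ψ)
    {w : FreeGroup α} (hw : w ∈ commutator (FreeGroup α)) :
    (φ w)⁻¹ * ψ w ∈ ⁅N, (⊤ : Subgroup G)⁆ := by
  set ρ := QuotientGroup.mk' ⁅N, (⊤ : Subgroup G)⁆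
  have key : ρ.comp φ w = ρ.comp ψ w := by
    refine freeGroup_eq_on_commutator (ρ.comp φ) (ρ.comp ψ) (N.map ρ) ?_ ?_ w hw
    · rintro c ⟨n, hn, rfl⟩ x
      exact central_in_quot N hn x
    · intro a
      have hmem : (φ (FreeGroup.of a))⁻¹ * ψ (FreeGroup.of a) ∈ N := by
        have := congrArg (fun f => f (FreeGroup.of a)) h
        simp only [MonoidHom.comp_apply] at this
        rw [QuotientGroup.mk'_apply, QuotientGroup.mk'_apply] at this
        exact (QuotientGroup.eq).mp this
      exact ⟨_, hmem, by simp [MonoidHom.comp_apply, map_mul, map_inv]⟩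
  simp only [MonoidHom.comp_apply, QuotientGroup.mk'_apply, ρ] at key
  exact (QuotientGroup.eq).mp key

lemma pmap_map_mem {z : FreeGroup G}
    (hz : z ∈ (freePres G).ker ⊓ commutator (FreeGroup G)) :
    pmap N (FreeGroup.map (⇑(QuotientGroup.mk' N)) z) ∈ ⁅N, (⊤ : Subgroup G)⁆ := by
  have hcomp : (QuotientGroup.mk' N).comp
        ((pmap N).comp (FreeGroup.map (⇑(QuotientGroup.mk' N))))
      = (QuotientGroup.mk' N).comp (freePres G) := by
    rw [← MonoidHom.comp_assoc, pmap_spec, freePres_naturality]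
  have h := lifts_congr N _ _ hcomp (Subgroup.mem_inf.mp hz).2
  simp only [MonoidHom.comp_apply] at h
  rw [MonoidHom.mem_ker.mp (Subgroup.mem_inf.mp hz).1, mul_one] at h
  simpa using Subgroup.inv_mem _ h

/-- Hopf-style lifting: any `n ∈ N ∩ [G,G]` is, modulo `⁅N,⊤⁆`, the image under
`pmap` of an element of `R ⊓ [F,F]`. -/
lemma exists_pmap_eq {n : G} (hn1 : n ∈ N) (hn2 : n ∈ commutator G) :
    ∃ x : FreeGroup (G ⧸ N),
      x ∈ (freePres (G ⧸ N)).ker ⊓ commutator (FreeGroup (G ⧸ N)) ∧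
      (pmap N x)⁻¹ * n ∈ ⁅N, (⊤ : Subgroup G)⁆ := by
  set ρ := QuotientGroup.mk' ⁅N, (⊤ : Subgroup G)⁆ with hρ
  have hsub : commutator (G ⧸ ⁅N, (⊤ : Subgroup G)⁆) ≤
      Subgroup.map (ρ.comp (pmap N)) (commutator (FreeGroup (G ⧸ N))) := by
    rw [commutator_def, Subgroup.commutator_le]
    intro a _ b _
    obtain ⟨g, rfl⟩ := QuotientGroup.mk'_surjective _ a
    obtain ⟨h, rfl⟩ := QuotientGroup.mk'_surjective _ b
    have hg : g * (sec N ((QuotientGroup.mk' N) g))⁻¹ ∈ N := by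
      have : (QuotientGroup.mk' N) (g * (sec N ((QuotientGroup.mk' N) g))⁻¹) = 1 := by
        rw [map_mul, map_inv, sec_spec, mul_inv_cancel]
      exact (QuotientGroup.eq_one_iff _).mp this
    have hh : h * (sec N ((QuotientGroup.mk' N) h))⁻¹ ∈ N := by
      have : (QuotientGroup.mk' N) (h * (sec N ((QuotientGroup.mk' N) h))⁻¹) = 1 := by
        rw [map_mul, map_inv, sec_spec, mul_inv_cancel]
      exact (QuotientGroup.eq_one_iff _).mp this
    have e1 : ρ g = ρ (sec N ((QuotientGroup.mk' N) g))
        * ρ (g * (sec N ((QuotientGroup.mk' N) g))⁻¹) := by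
      rw [← central_in_quot N hg, ← map_mul]
      congr 1
      group
    have e2 : ρ h = ρ (sec N ((QuotientGroup.mk' N) h))
        * ρ (h * (sec N ((QuotientGroup.mk' N) h))⁻¹) := by
      rw [← central_in_quot N hh, ← map_mul]
      congr 1
      group
    have e3 : ⁅ρ g, ρ h⁆ = ⁅ρ (sec N ((QuotientGroup.mk' N) g)),
        ρ (sec N ((QuotientGroup.mk' N) h))⁆ := by
      rw [e1, e2]
      exact comm_mul_central _ _ _ _ (central_in_quot N hg) (central_in_quot N hh)
    refine ⟨⁅FreeGroup.of ((QuotientGroup.mk' N) g), FreeGroup.of ((QuotientGroup.mk' N) h)⁆,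
      Subgroup.commutator_mem_commutator (Subgroup.mem_top _) (Subgroup.mem_top _), ?_⟩
    rw [map_commutatorElement]
    simp only [MonoidHom.comp_apply, pmap, FreeGroup.lift_apply_of]
    exact e3.symm
  have hle : Subgroup.map ρ (commutator G) ≤ commutator (G ⧸ ⁅N, (⊤ : Subgroup G)⁆) := by
    rw [commutator_def, commutator_def, Subgroup.map_commutator]
    exact Subgroup.commutator_mono le_top le_top
  obtain ⟨x, hxc, hx⟩ := hsub (hle ⟨n, hn2, rfl⟩)
  have hdiff : (pmap N x)⁻¹ * n ∈ ⁅N, (⊤ : Subgroup G)⁆ := by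
    apply (QuotientGroup.eq).mp
    simpa [MonoidHom.comp_apply, QuotientGroup.mk'_apply, hρ] using hx
  have hmemN : pmap N x ∈ N := by
    have h1 : (pmap N x)⁻¹ * n ∈ N := Subgroup.commutator_le_left N ⊤ hdiff
    have : (pmap N x)⁻¹ = ((pmap N x)⁻¹ * n) * n⁻¹ := by group
    have h2 : (pmap N x)⁻¹ ∈ N := this ▸ N.mul_mem h1 (N.inv_mem hn1)
    simpa using N.inv_mem h2
  have hker : x ∈ (freePres (G ⧸ N)).ker := by
    rw [MonoidHom.mem_ker, ← pmap_spec N, MonoidHom.comp_apply]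
    simpa [QuotientGroup.eq_one_iff] using hmemN
  exact ⟨x, Subgroup.mem_inf.mpr ⟨hker, hxc⟩, hdiff⟩

/-- Hopf-style lifting for `H₂`: if `x ∈ R ⊓ [F,F]` has `pmap x ∈ ⁅N,⊤⁆`, then up to
`⁅R,⊤⁆` it comes from `ker (freePres G) ⊓ [F_G,F_G]`. -/
lemma exists_schur_preimage {x : FreeGroup (G ⧸ N)}
    (hx : x ∈ (freePres (G ⧸ N)).ker ⊓ commutator (FreeGroup (G ⧸ N)))
    (h1 : pmap N x ∈ ⁅N, (⊤ : Subgroup G)⁆) :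
    ∃ z : FreeGroup G, z ∈ (freePres G).ker ⊓ commutator (FreeGroup G) ∧
      (FreeGroup.map (⇑(QuotientGroup.mk' N)) z)⁻¹ * x
        ∈ ⁅(freePres (G ⧸ N)).ker, (⊤ : Subgroup (FreeGroup (G ⧸ N)))⁆ := by
  set π := QuotientGroup.mk' N
  set m := FreeGroup.map (⇑π)
  have hm : Function.Surjective m := freeGroup_map_surjective (QuotientGroup.mk'_surjective N)
  -- lift x to a commutator element w of FreeGroup G
  have hxcomm : x ∈ Subgroup.map m (commutator (FreeGroup G)) := by
    rw [map_commutator_eq_of_surjective m hm]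
    exact (Subgroup.mem_inf.mp hx).2
  obtain ⟨w, hwcomm, hwx⟩ := hxcomm
  -- e w ∈ ⁅N,⊤⁆
  have hcomp : π.comp ((pmap N).comp m) = π.comp (freePres G) := by
    rw [← MonoidHom.comp_assoc, pmap_spec, freePres_naturality]
  have hlift := lifts_congr N ((pmap N).comp m) (freePres G) hcomp hwcomm
  simp only [MonoidHom.comp_apply] at hlift
  rw [hwx] at hlift
  have hew : freePres G w ∈ ⁅N, (⊤ : Subgroup G)⁆ := by
    have := Subgroup.mul_mem _ h1 hlift
    simpa using this
  -- find v ∈ ⁅T,⊤⁆ with e v = e w, T = comap e N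
  have himg : Subgroup.map (freePres G)
      ⁅Subgroup.comap (freePres G) N, (⊤ : Subgroup (FreeGroup G))⁆
      = ⁅N, (⊤ : Subgroup G)⁆ := by
    rw [Subgroup.map_commutator,
      Subgroup.map_comap_eq_self_of_surjective (freePres_surjective G), ← MonoidHom.range_eq_map,
      MonoidHom.range_eq_top_of_surjective _ (freePres_surjective G)]
  obtain ⟨v, hv, hvw⟩ : ∃ v ∈ ⁅Subgroup.comap (freePres G) N, (⊤ : Subgroup (FreeGroup G))⁆,
      freePres G v = freePres G w := by
    have := himg ▸ hew
    obtain ⟨v, hv, hveq⟩ := this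
    exact ⟨v, hv, hveq⟩
  have hvcomm : v ∈ commutator (FreeGroup G) := by
    rw [commutator_def]
    exact Subgroup.commutator_mono le_top le_top hv
  have hmv : m v ∈ ⁅(freePres (G ⧸ N)).ker, (⊤ : Subgroup (FreeGroup (G ⧸ N)))⁆ := by
    have hle : Subgroup.map m ⁅Subgroup.comap (freePres G) N, (⊤ : Subgroup (FreeGroup G))⁆
        ≤ ⁅(freePres (G ⧸ N)).ker, (⊤ : Subgroup (FreeGroup (G ⧸ N)))⁆ := by
      rw [Subgroup.map_commutator]
      refine Subgroup.commutator_mono ?_ le_top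
      rintro y ⟨t, ht, rfl⟩
      rw [MonoidHom.mem_ker, ← MonoidHom.comp_apply, freePres_naturality, MonoidHom.comp_apply]
      exact (QuotientGroup.eq_one_iff _).mpr ht
    exact hle ⟨v, hv, rfl⟩
  refine ⟨w * v⁻¹, Subgroup.mem_inf.mpr ⟨?_, ?_⟩, ?_⟩
  · rw [MonoidHom.mem_ker, map_mul, map_inv, hvw, mul_inv_cancel]
  · exact Subgroup.mul_mem _ hwcomm (Subgroup.inv_mem _ hvcomm)
  · have : (m (w * v⁻¹))⁻¹ * x = m v * ((m w)⁻¹ * x) := by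
      rw [map_mul, map_inv]; group
    rw [this, hwx]
    simpa using hmv

end Sec
end StallingsHelpers

section StallingsBeta

lemma SchurH2map_mk {G₁ G₂ : Type*} [Group G₁] [Group G₂] (f : G₁ →* G₂)
    (x : ↥((freePres G₁).ker ⊓ commutator (FreeGroup G₁))) :
    SchurH2map f (QuotientGroup.mk x)
      = QuotientGroup.mk ⟨FreeGroup.map f x.1, freeMap_mem f x⟩ := rfl

lemma coinvMap_mk {G G' : Type*} [Group G] [Group G'] (f : G →* G') (N : Subgroup G)
    (N' : Subgroup G') [N.Normal] [N'.Normal] (hf : ∀ n ∈ N, f n ∈ N') (n : N) :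
    coinvMap f N N' hf (QuotientGroup.mk n) = QuotientGroup.mk ⟨f n.1, hf n.1 n.2⟩ := rfl

lemma coinvToAb_mk {G : Type*} [Group G] (N : Subgroup G) [N.Normal] (n : N) :
    coinvToAb G N (QuotientGroup.mk n) = Abelianization.of (n : G) := rfl

variable (G : Type*) [Group G] (N : Subgroup G) [N.Normal]

/-- The connecting map `H₂(Q) → N/[N,G]` on representatives. -/
noncomputable def stallingsAux :
    ↥((freePres (G ⧸ N)).ker ⊓ commutator (FreeGroup (G ⧸ N))) →* Coinv G N :=
  (QuotientGroup.mk' _).comp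
    (((pmap N).comp (Subgroup.subtype _)).codRestrict N
      (fun x => pmap_mem_ker N (Subgroup.mem_inf.mp x.2).1))

/-- Stallings' connecting map `H₂(Q) → N/[N,G]`. -/
noncomputable def stallingsB : SchurH2 (G ⧸ N) →* Coinv G N :=
  QuotientGroup.lift _ (stallingsAux G N)
    (fun x hx => by
      have h : pmap N x.1 ∈ ⁅N, (⊤ : Subgroup G)⁆ :=
        pmap_mem_relcomm N (Subgroup.mem_subgroupOf.mp hx)
      exact MonoidHom.mem_ker.mpr
        ((QuotientGroup.eq_one_iff _).mpr (Subgroup.mem_subgroupOf.mpr h)))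

lemma stallingsB_mk (x : ↥((freePres (G ⧸ N)).ker ⊓ commutator (FreeGroup (G ⧸ N)))) :
    stallingsB G N (QuotientGroup.mk x)
      = QuotientGroup.mk ⟨pmap N x.1, pmap_mem_ker N (Subgroup.mem_inf.mp x.2).1⟩ := rfl

lemma stallingsB_mk_eq_one_iff
    (x : ↥((freePres (G ⧸ N)).ker ⊓ commutator (FreeGroup (G ⧸ N)))) :
    stallingsB G N (QuotientGroup.mk x) = 1 ↔ pmap N x.1 ∈ ⁅N, (⊤ : Subgroup G)⁆ := by
  rw [stallingsB_mk, QuotientGroup.eq_one_iff, Subgroup.mem_subgroupOf]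

end StallingsBeta

universe u

/-- Stallings' five-term exact sequence: for every short exact sequence
`1 → N → G → Q → 1` of groups there is an exact sequence
`H₂(G;ℤ) → H₂(Q;ℤ) → N/[N,G] → H₁(G;ℤ) → H₁(Q;ℤ) → 0`,
natural in morphisms of short exact sequences.  Here `H₂` is the Hopf-formula model
`SchurH2`, `H₁` is the abelianization, the maps `H₂(G) → H₂(Q)` and `H₁(G) → H₁(Q)` are
induced by `G → Q = G/N`, the map `N/[N,G] → H₁(G)` is `coinvToAb`, and the connecting
map `H₂(Q) → N/[N,G]` is asserted to exist, naturally in the pair `(G, N)`. -/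
theorem stmt16 :
    ∃ β : ∀ (G : Type u) [Group G] (N : Subgroup G) [N.Normal],
        SchurH2 (G ⧸ N) →* Coinv G N,
      (∀ (G : Type u) [Group G] (N : Subgroup G) [N.Normal],
        -- exactness at `H₂(Q)`
        (∀ y : SchurH2 (G ⧸ N),
          β G N y = 1 ↔ y ∈ Set.range (SchurH2map (QuotientGroup.mk' N))) ∧
        -- exactness at `N/[N,G]`
        (∀ z : Coinv G N, coinvToAb G N z = 1 ↔ z ∈ Set.range (β G N)) ∧
        -- exactness at `H₁(G)`
        (∀ w : Abelianization G,
          Abelianization.map (QuotientGroup.mk' N) w = 1 ↔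
            w ∈ Set.range (coinvToAb G N)) ∧
        -- exactness at `H₁(Q)`: surjectivity
        Function.Surjective (Abelianization.map (QuotientGroup.mk' N))) ∧
      -- naturality in morphisms of short exact sequences
      (∀ (G G' : Type u) [Group G] [Group G'] (N : Subgroup G) (N' : Subgroup G')
          [N.Normal] [N'.Normal] (f : G →* G') (hf : ∀ n ∈ N, f n ∈ N'),
        (β G' N').comp
            (SchurH2map (QuotientGroup.map N N' f (fun n hn => hf n hn))) =
          (coinvMap f N N' hf).comp (β G N)) := by
  refine ⟨fun G _ N _ => stallingsB G N, ?_, ?_⟩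
  · intro G _ N _
    refine ⟨?_, ?_, ?_, ?_⟩
    · -- exactness at H₂(Q)
      intro y
      induction y using QuotientGroup.induction_on with
      | _ x =>
      rw [stallingsB_mk_eq_one_iff]
      constructor
      · intro h1
        obtain ⟨z, hz, hzx⟩ := exists_schur_preimage N x.2 h1
        refine ⟨QuotientGroup.mk ⟨z, hz⟩, ?_⟩
        rw [SchurH2map_mk, QuotientGroup.eq, Subgroup.mem_subgroupOf]
        simpa using hzx
      · rintro ⟨yy, hyy⟩
        induction yy using QuotientGroup.induction_on with
        | _ z =>
        rw [SchurH2map_mk] at hyy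
        have hmem := (QuotientGroup.eq).mp hyy
        rw [Subgroup.mem_subgroupOf] at hmem
        have hmem' : (FreeGroup.map (⇑(QuotientGroup.mk' N)) z.1)⁻¹ * x.1
            ∈ ⁅(freePres (G ⧸ N)).ker, (⊤ : Subgroup (FreeGroup (G ⧸ N)))⁆ := by
          simpa using hmem
        have hx2 := pmap_mem_relcomm N hmem'
        have hz2 := pmap_map_mem N z.2
        have hsplit : pmap N x.1 = pmap N (FreeGroup.map (⇑(QuotientGroup.mk' N)) z.1)
            * pmap N ((FreeGroup.map (⇑(QuotientGroup.mk' N)) z.1)⁻¹ * x.1) := by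
          rw [← map_mul]
          congr 1
          group
        rw [hsplit]
        exact Subgroup.mul_mem _ hz2 hx2
    · -- exactness at N/[N,G]
      intro z
      induction z using QuotientGroup.induction_on with
      | _ n =>
      constructor
      · intro h1
        have hc : (n : G) ∈ commutator G := by
          have h1' : Abelianization.of (n : G) = 1 := h1
          exact (QuotientGroup.eq_one_iff _).mp h1'
        obtain ⟨x, hx, hdiff⟩ := exists_pmap_eq N n.2 hc
        refine ⟨QuotientGroup.mk ⟨x, hx⟩, ?_⟩
        rw [stallingsB_mk, QuotientGroup.eq, Subgroup.mem_subgroupOf]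
        simpa using hdiff
      · rintro ⟨y, hy⟩
        induction y using QuotientGroup.induction_on with
        | _ x =>
        rw [← hy, stallingsB_mk, coinvToAb_mk]
        exact (QuotientGroup.eq_one_iff _).mpr
          (pmap_mem_commutator N (Subgroup.mem_inf.mp x.2).2)
    · -- exactness at H₁(G)
      intro w
      induction w using QuotientGroup.induction_on with
      | _ g =>
      constructor
      · intro h1
        have h1' : Abelianization.of ((QuotientGroup.mk' N) g) = 1 := by
          rw [← Abelianization.map_of]
          exact h1
        have hπ : (QuotientGroup.mk' N) g ∈ commutator (G ⧸ N) :=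
          (QuotientGroup.eq_one_iff _).mp h1'
        rw [← map_commutator_eq_of_surjective (QuotientGroup.mk' N)
          (QuotientGroup.mk'_surjective N)] at hπ
        obtain ⟨c, hc, hcg⟩ := hπ
        have hgc : g * c⁻¹ ∈ N := by
          have : (QuotientGroup.mk' N) (g * c⁻¹) = 1 := by
            rw [map_mul, map_inv, hcg, mul_inv_cancel]
          exact (QuotientGroup.eq_one_iff _).mp this
        refine ⟨QuotientGroup.mk ⟨g * c⁻¹, hgc⟩, ?_⟩
        rw [coinvToAb_mk]
        have hc1 : Abelianization.of c = 1 := (QuotientGroup.eq_one_iff _).mpr hc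
        show Abelianization.of (g * c⁻¹) = Abelianization.of g
        rw [map_mul, map_inv, hc1, inv_one, mul_one]
      · rintro ⟨z, hz⟩
        induction z using QuotientGroup.induction_on with
        | _ n =>
        rw [← hz, coinvToAb_mk]
        have : Abelianization.map (QuotientGroup.mk' N) (Abelianization.of (n : G))
            = Abelianization.of ((QuotientGroup.mk' N) (n : G)) := Abelianization.map_of _ _
        have h3 : (QuotientGroup.mk' N) (n : G) = 1 := (QuotientGroup.eq_one_iff _).mpr n.2
        rw [this, h3, map_one]
    · -- surjectivity of H₁(G) → H₁(Q)
      intro y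
      induction y using QuotientGroup.induction_on with
      | _ q =>
      obtain ⟨g, rfl⟩ := QuotientGroup.mk'_surjective N q
      exact ⟨Abelianization.of g, Abelianization.map_of _ _⟩
  · -- naturality
    intro G G' _ _ N N' _ _ f hf
    refine MonoidHom.ext fun y => ?_
    induction y using QuotientGroup.induction_on with
    | _ x =>
    rw [MonoidHom.comp_apply, MonoidHom.comp_apply, SchurH2map_mk, stallingsB_mk,
      stallingsB_mk, coinvMap_mk, QuotientGroup.eq, Subgroup.mem_subgroupOf]
    have h2 : (QuotientGroup.mk' N').comp f
        = (QuotientGroup.map N N' f (fun n hn => hf n hn)).comp (QuotientGroup.mk' N) := by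
      ext g
      simp [QuotientGroup.map_mk']
      rfl
    have hcomp : (QuotientGroup.mk' N').comp ((pmap N').comp
          (FreeGroup.map (⇑(QuotientGroup.map N N' f (fun n hn => hf n hn)))))
        = (QuotientGroup.mk' N').comp (f.comp (pmap N)) := by
      rw [← MonoidHom.comp_assoc, pmap_spec, freePres_naturality, ← MonoidHom.comp_assoc, h2,
        MonoidHom.comp_assoc, pmap_spec]
    have h := lifts_congr N' _ _ hcomp (Subgroup.mem_inf.mp x.2).2
    simp only [MonoidHom.comp_apply] at h
    simpa using h

end
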